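/- The map $(T,\|\cdot\|)\mapsto T^*\|\cdot\|$, where $(T^*\|\cdot\|)(x)=\|Tx\|$, is continuous from $\operatorname{GL}(n,\mathbb{R})\times\mathcal{N}$ to $\mathcal{N}$, where $\mathcal{N}$ is the space of equivalence classes of norms on $\mathbb{R}^n$ modulo positive scaling with the multiplicative distance; however, this fails for continuous quasinorms: there exists a quasinorm $\|\cdot\|$ on $\mathbb{R}^2$ and rotations $T_k$ (angle $\pi/k$) converging to the identity such that $d(T_k^*\|\cdot\|,T_l^*\|\cdot\|)=4$ for all $k\neq l$. -/

import Mathlib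

open scoped Real

def IsQuasinorm {E : Type*} [AddCommGroup E] [Module ℝ E] (q : E → ℝ) : Prop :=
  (∀ x, 0 ≤ q x) ∧ (∀ x, q x = 0 ↔ x = 0) ∧
  (∀ (c : ℝ) (x : E), q (c • x) = |c| * q x) ∧
  ∃ k : ℝ, 0 < k ∧ ∀ x y, q (x + y) ≤ k * (q x + q y)

def IsNormFn {E : Type*} [AddCommGroup E] [Module ℝ E] (q : E → ℝ) : Prop :=
  (∀ x, 0 ≤ q x) ∧ (∀ x, q x = 0 ↔ x = 0) ∧
  (∀ (c : ℝ) (x : E), q (c • x) = |c| * q x) ∧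
  ∀ x y, q (x + y) ≤ q x + q y

def distSet {E : Type*} [AddCommGroup E] [Module ℝ E] (q r : E → ℝ) : Set ℝ :=
  {μ : ℝ | 1 ≤ μ ∧ ∃ l : ℝ, 0 < l ∧ ∀ x, q x ≤ l * r x ∧ l * r x ≤ μ * q x}

noncomputable def multDist {E : Type*} [AddCommGroup E] [Module ℝ E] (q r : E → ℝ) : ℝ :=
  sInf (distSet q r)



lemma normfn_zero {E : Type*} [AddCommGroup E] [Module ℝ E] {q : E → ℝ} (hq : IsNormFn q) :
    q 0 = 0 := (hq.2.1 0).mpr rfl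

lemma normfn_sum_le {n : ℕ} {q : (Fin n → ℝ) → ℝ} (hq : IsNormFn q) {ι : Type*} (s : Finset ι)
    (f : ι → (Fin n → ℝ)) : q (∑ i ∈ s, f i) ≤ ∑ i ∈ s, q (f i) := by
  classical
  induction s using Finset.induction_on with
  | empty => simp [normfn_zero hq]
  | insert _ _ h ih =>
    rw [Finset.sum_insert h, Finset.sum_insert h]
    exact le_trans (hq.2.2.2 _ _) (by linarith)

lemma normfn_upper {n : ℕ} {q : (Fin n → ℝ) → ℝ} (hq : IsNormFn q) :
    ∃ b : ℝ, 0 < b ∧ ∀ x, q x ≤ b * ‖x‖ := by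
  set e : Fin n → (Fin n → ℝ) := fun i => Pi.single i 1 with he
  have hs0 : 0 ≤ ∑ i : Fin n, q (e i) := Finset.sum_nonneg fun i _ => hq.1 _
  refine ⟨(∑ i : Fin n, q (e i)) + 1, by linarith, fun x => ?_⟩
  have hrepr : x = ∑ i : Fin n, (x i) • e i := by
    funext j
    rw [Finset.sum_apply]
    simp [he, Pi.single_apply]
  calc q x = q (∑ i : Fin n, (x i) • e i) := by rw [← hrepr]
  _ ≤ ∑ i : Fin n, q ((x i) • e i) := normfn_sum_le hq _ _
  _ = ∑ i : Fin n, |x i| * q (e i) :=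
      Finset.sum_congr rfl fun i _ => hq.2.2.1 _ _
  _ ≤ ∑ i : Fin n, ‖x‖ * q (e i) := by
      refine Finset.sum_le_sum fun i _ => mul_le_mul_of_nonneg_right ?_ (hq.1 _)
      simpa using norm_le_pi_norm x i
  _ = (∑ i : Fin n, q (e i)) * ‖x‖ := by rw [← Finset.mul_sum, mul_comm]
  _ ≤ ((∑ i : Fin n, q (e i)) + 1) * ‖x‖ := by
      have := norm_nonneg x; nlinarith

lemma normfn_cont {n : ℕ} {q : (Fin n → ℝ) → ℝ} (hq : IsNormFn q) : Continuous q := by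
  obtain ⟨b, hb, hub⟩ := normfn_upper hq
  have key : ∀ x y : Fin n → ℝ, |q x - q y| ≤ b * ‖x - y‖ := by
    intro x y
    have h1 : q x ≤ q (x - y) + q y := by
      have := hq.2.2.2 (x - y) y; rwa [sub_add_cancel] at this
    have h2 : q y ≤ q (y - x) + q x := by
      have := hq.2.2.2 (y - x) x; rwa [sub_add_cancel] at this
    have h3 : q (x - y) ≤ b * ‖x - y‖ := hub _
    have h4 : q (y - x) ≤ b * ‖y - x‖ := hub _
    rw [norm_sub_rev y x] at h4
    rw [abs_sub_le_iff]
    constructor <;> linarith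
  exact (LipschitzWith.of_dist_le_mul (K := ⟨b, hb.le⟩) fun x y => by
    rw [Real.dist_eq, dist_eq_norm]; exact key x y).continuous

lemma normfn_equiv {n : ℕ} {q : (Fin n → ℝ) → ℝ} (hq : IsNormFn q) :
    ∃ a b : ℝ, 0 < a ∧ 0 < b ∧ ∀ x, a * ‖x‖ ≤ q x ∧ q x ≤ b * ‖x‖ := by
  obtain ⟨b, hb, hub⟩ := normfn_upper hq
  rcases Nat.eq_zero_or_pos n with hn | hn
  · subst hn
    refine ⟨1, b, one_pos, hb, fun x => ?_⟩
    have hx : x = 0 := funext fun i => i.elim0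
    have h0 : q x = 0 := by rw [hx]; exact normfn_zero hq
    have h1 : ‖x‖ = 0 := by rw [hx, norm_zero]
    rw [h0, h1]; norm_num
  · haveI : Nonempty (Fin n) := ⟨⟨0, hn⟩⟩
    have hsph : (Metric.sphere (0 : Fin n → ℝ) 1).Nonempty :=
      NormedSpace.sphere_nonempty.mpr zero_le_one
    obtain ⟨x₀, hx₀mem, hx₀min⟩ := (isCompact_sphere (0 : Fin n → ℝ) 1).exists_isMinOn hsph
      (normfn_cont hq).continuousOn
    have hx₀norm : ‖x₀‖ = 1 := by simpa using hx₀mem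
    have hx₀ne : x₀ ≠ 0 := by intro h; rw [h] at hx₀norm; simp at hx₀norm
    have ha : 0 < q x₀ :=
      lt_of_le_of_ne (hq.1 x₀) (fun h => hx₀ne ((hq.2.1 x₀).mp h.symm))
    refine ⟨q x₀, b, ha, hb, fun x => ⟨?_, hub x⟩⟩
    rcases eq_or_ne x 0 with rfl | hx
    · simp [normfn_zero hq]
    · have hxn : (0:ℝ) < ‖x‖ := norm_pos_iff.mpr hx
      have hu : ‖x‖⁻¹ • x ∈ Metric.sphere (0 : Fin n → ℝ) 1 := by
        simp [norm_smul, abs_of_pos (inv_pos.mpr hxn), inv_mul_cancel₀ hxn.ne']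
      have hmin : q x₀ ≤ q (‖x‖⁻¹ • x) := hx₀min hu
      have hq' : q (‖x‖⁻¹ • x) = ‖x‖⁻¹ * q x := by
        rw [hq.2.2.1, abs_of_pos (inv_pos.mpr hxn)]
      rw [hq'] at hmin
      have : q x₀ * ‖x‖ ≤ (‖x‖⁻¹ * q x) * ‖x‖ :=
        mul_le_mul_of_nonneg_right hmin hxn.le
      calc q x₀ * ‖x‖ ≤ (‖x‖⁻¹ * q x) * ‖x‖ := this
      _ = q x := by field_simp

lemma mulVec_norm_le {n : ℕ} (M : Matrix (Fin n) (Fin n) ℝ) (x : Fin n → ℝ) :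
    ‖M.mulVec x‖ ≤ (∑ i, ∑ j, |M i j|) * ‖x‖ := by
  have hsum0 : 0 ≤ ∑ i, ∑ j, |M i j| :=
    Finset.sum_nonneg fun _ _ => Finset.sum_nonneg fun _ _ => abs_nonneg _
  have hC : 0 ≤ (∑ i, ∑ j, |M i j|) * ‖x‖ := mul_nonneg hsum0 (norm_nonneg _)
  rw [pi_norm_le_iff_of_nonneg hC]
  intro i
  have h1 : M.mulVec x i = ∑ j, M i j * x j := rfl
  rw [Real.norm_eq_abs, h1]
  calc |∑ j, M i j * x j| ≤ ∑ j, |M i j * x j| := Finset.abs_sum_le_sum_abs _ _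
  _ = ∑ j, |M i j| * |x j| := by simp [abs_mul]
  _ ≤ ∑ j, |M i j| * ‖x‖ := by
      refine Finset.sum_le_sum fun j _ => mul_le_mul_of_nonneg_left ?_ (abs_nonneg _)
      simpa using norm_le_pi_norm x j
  _ = (∑ j, |M i j|) * ‖x‖ := by rw [Finset.sum_mul]
  _ ≤ (∑ i' : Fin n, ∑ j : Fin n, |M i' j|) * ‖x‖ := by
      refine mul_le_mul_of_nonneg_right ?_ (norm_nonneg _)
      exact Finset.single_le_sum (f := fun i' : Fin n => ∑ j : Fin n, |M i' j|)
        (fun i _ => Finset.sum_nonneg fun j _ => abs_nonneg _) (Finset.mem_univ i)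

set_option maxHeartbeats 1000000 in
lemma part1 {n : ℕ} : ∀ q : (Fin n → ℝ) → ℝ, IsNormFn q → ∀ T : Matrix (Fin n) (Fin n) ℝ, IsUnit T →
    ∀ ε : ℝ, 0 < ε → ∃ δ : ℝ, 0 < δ ∧
      ∀ r : (Fin n → ℝ) → ℝ, IsNormFn r → ∀ S : Matrix (Fin n) (Fin n) ℝ, IsUnit S →
        (∀ i j, |S i j - T i j| < δ) → multDist r q < 1 + δ →
        multDist (fun x => r (S.mulVec x)) (fun x => q (T.mulVec x)) < 1 + ε := by
  intro q hq T hT ε hε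
  rcases Nat.eq_zero_or_pos n with hn | hn
  · refine ⟨1, one_pos, fun r hr S hS hST hrq => ?_⟩
    have mem1 : (1:ℝ) ∈ distSet (fun x => r (S.mulVec x)) (fun x => q (T.mulVec x)) := by
      refine ⟨le_refl 1, 1, one_pos, fun x => ?_⟩
      have hx0 : S.mulVec x = 0 := funext fun i => absurd i.2 (by omega)
      have hx0' : T.mulVec x = 0 := funext fun i => absurd i.2 (by omega)
      simp only [hx0, hx0', normfn_zero hr, normfn_zero hq]
      norm_num
    have hle : multDist (fun x => r (S.mulVec x)) (fun x => q (T.mulVec x)) ≤ 1 :=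
      csInf_le ⟨1, fun μ hμ => hμ.1⟩ mem1
    linarith
  · obtain ⟨a, b, ha, hb, hab⟩ := normfn_equiv hq
    have hdet : IsUnit T.det := (Matrix.isUnit_iff_isUnit_det T).mp hT
    have hTiT : ∀ x, T⁻¹.mulVec (T.mulVec x) = x := by
      intro x
      rw [Matrix.mulVec_mulVec, Matrix.nonsing_inv_mul T hdet, Matrix.one_mulVec]
    set cI := ∑ i : Fin n, ∑ j : Fin n, |T⁻¹ i j| with hcI
    have hcI0 : 0 ≤ cI :=
      Finset.sum_nonneg fun _ _ => Finset.sum_nonneg fun _ _ => abs_nonneg _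
    set K := b * cI / a with hKdef
    have hK0 : 0 ≤ K := by positivity
    have hK : ∀ x, q x ≤ K * q (T.mulVec x) := by
      intro x
      have h1 : q x ≤ b * ‖x‖ := (hab x).2
      have h3 : ‖x‖ ≤ cI * ‖T.mulVec x‖ := by
        have := mulVec_norm_le T⁻¹ (T.mulVec x)
        rwa [hTiT] at this
      have h4 : a * ‖T.mulVec x‖ ≤ q (T.mulVec x) := (hab _).1
      have h5 : ‖T.mulVec x‖ ≤ q (T.mulVec x) / a := by
        rw [le_div_iff₀ ha]; linarith
      have h6 : ‖x‖ ≤ cI * (q (T.mulVec x) / a) := by nlinarith [norm_nonneg (T.mulVec x)]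
      calc q x ≤ b * ‖x‖ := h1
      _ ≤ b * (cI * (q (T.mulVec x) / a)) := by nlinarith [norm_nonneg x]
      _ = K * q (T.mulVec x) := by rw [hKdef]; field_simp
    set D := (b * (n:ℝ)^2 / a) * (K + 1) + 1 with hD
    have hDpos : 0 < D := by positivity
    set δ := min (min 1 (1 / (2 * D))) (ε / (2 + 3 * D + ε * D)) with hδ
    have hδpos : 0 < δ := by
      refine lt_min (lt_min one_pos (by positivity)) (by positivity)
    have hδ1 : δ ≤ 1 := le_trans (min_le_left _ _) (min_le_left _ _)
    have hδ2 : δ ≤ 1 / (2 * D) := le_trans (min_le_left _ _) (min_le_right _ _)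
    have hδ3 : δ ≤ ε / (2 + 3 * D + ε * D) := min_le_right _ _
    have hDδ : D * δ ≤ 1 / 2 := by
      have := mul_le_mul_of_nonneg_left hδ2 hDpos.le
      calc D * δ ≤ D * (1 / (2 * D)) := this
      _ = 1 / 2 := by field_simp
    have hDδ0 : 0 ≤ D * δ := mul_nonneg hDpos.le hδpos.le
    clear_value cI K D δ
    refine ⟨δ, hδpos, fun r hr S hS hST hrq => ?_⟩
    have hqT0 : ∀ x, 0 ≤ q (T.mulVec x) := fun x => hq.1 _
    -- difference bound
    have hdiff : ∀ x, q ((S - T).mulVec x) ≤ D * δ * q (T.mulVec x) := by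
      intro x
      have h1 : q ((S - T).mulVec x) ≤ b * ‖(S - T).mulVec x‖ := (hab _).2
      have h2 : ‖(S - T).mulVec x‖ ≤ (∑ i : Fin n, ∑ j : Fin n, |(S - T) i j|) * ‖x‖ :=
        mulVec_norm_le _ _
      have h3 : (∑ i : Fin n, ∑ j : Fin n, |(S - T) i j|) ≤ (n:ℝ)^2 * δ := by
        calc (∑ i : Fin n, ∑ j : Fin n, |(S - T) i j|)
            ≤ ∑ _i : Fin n, ∑ _j : Fin n, δ := by
              refine Finset.sum_le_sum fun i _ => Finset.sum_le_sum fun j _ => ?_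
              simpa [Matrix.sub_apply] using (hST i j).le
        _ = (n:ℝ)^2 * δ := by
              simp [Finset.sum_const, Finset.card_univ]
              ring
      have h4 : a * ‖x‖ ≤ q x := (hab _).1
      have h5 : q x ≤ K * q (T.mulVec x) := hK x
      have hnx : 0 ≤ ‖x‖ := norm_nonneg x
      have hsum0 : (0:ℝ) ≤ ∑ i : Fin n, ∑ j : Fin n, |(S - T) i j| :=
        Finset.sum_nonneg fun _ _ => Finset.sum_nonneg fun _ _ => abs_nonneg _
      have h2' : ‖(S - T).mulVec x‖ ≤ (n:ℝ)^2 * δ * ‖x‖ :=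
        h2.trans (mul_le_mul_of_nonneg_right h3 hnx)
      have c1 : q ((S - T).mulVec x) ≤ b * ((n:ℝ)^2 * δ) * ‖x‖ := by
        refine h1.trans ?_
        rw [mul_assoc]
        exact mul_le_mul_of_nonneg_left h2' hb.le
      have c2 : ‖x‖ ≤ K * q (T.mulVec x) / a := by
        rw [le_div_iff₀ ha]; linarith only [h4, h5]
      have c3 : q ((S - T).mulVec x) ≤ b * ((n:ℝ)^2 * δ) * (K * q (T.mulVec x) / a) := by
        refine c1.trans (mul_le_mul_of_nonneg_left c2 ?_)
        exact mul_nonneg hb.le (mul_nonneg (sq_nonneg _) hδpos.le)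
      calc q ((S - T).mulVec x) ≤ b * ((n:ℝ)^2 * δ) * (K * q (T.mulVec x) / a) := c3
      _ = ((b * (n:ℝ)^2 / a) * K) * δ * q (T.mulVec x) := by field_simp
      _ ≤ D * δ * q (T.mulVec x) := by
          have hB : (0:ℝ) ≤ b * (n:ℝ)^2 / a := by positivity
          have hle : (b * (n:ℝ)^2 / a) * K ≤ D := by
            rw [hD]; nlinarith only [hB, hK0]
          have := mul_le_mul_of_nonneg_right hle (mul_nonneg hδpos.le (hqT0 x))
          nlinarith only [this]
    have hS_T : ∀ x, q (S.mulVec x) ≤ (1 + D * δ) * q (T.mulVec x) := by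
      intro x
      have hrepr : S.mulVec x = T.mulVec x + (S - T).mulVec x := by
        rw [Matrix.sub_mulVec]; abel
      rw [hrepr]
      have w1 := hq.2.2.2 (T.mulVec x) ((S - T).mulVec x)
      have w2 := hdiff x
      linarith only [w1, w2]
    have hT_S : ∀ x, (1 - D * δ) * q (T.mulVec x) ≤ q (S.mulVec x) := by
      intro x
      have hrepr : T.mulVec x = S.mulVec x + (T - S).mulVec x := by
        rw [Matrix.sub_mulVec]; abel
      have hneg : q ((T - S).mulVec x) = q ((S - T).mulVec x) := by
        have h1 : (T - S).mulVec x = (-1 : ℝ) • ((S - T).mulVec x) := by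
          rw [Matrix.sub_mulVec, Matrix.sub_mulVec]
          funext i; simp
        rw [h1, hq.2.2.1]
        norm_num
      have htr := hq.2.2.2 (S.mulVec x) ((T - S).mulVec x)
      rw [← hrepr, hneg] at htr
      have w2 := hdiff x
      linarith only [htr, w2]
    -- extract witness from hrq
    obtain ⟨ar, br, har, hbr, habr⟩ := normfn_equiv hr
    have hne : (distSet r q).Nonempty := by
      refine ⟨max 1 (b * br / (a * ar)), le_max_left _ _, br / a, by positivity, fun x => ?_⟩
      have h1 : r x ≤ br * ‖x‖ := (habr x).2
      have h2 : a * ‖x‖ ≤ q x := (hab x).1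
      have h3 : q x ≤ b * ‖x‖ := (hab x).2
      have h4 : ar * ‖x‖ ≤ r x := (habr x).1
      have hnx : 0 ≤ ‖x‖ := norm_nonneg x
      constructor
      · rw [div_mul_eq_mul_div, le_div_iff₀ ha]
        have g1 := mul_le_mul_of_nonneg_right h1 ha.le
        have g2 := mul_le_mul_of_nonneg_left h2 hbr.le
        nlinarith only [g1, g2]
      · have hmax : b * br / (a * ar) ≤ max 1 (b * br / (a * ar)) := le_max_right _ _
        have hrx : 0 ≤ r x := hr.1 x
        have step : br / a * q x ≤ b * br / (a * ar) * r x := by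
          have gx : ‖x‖ ≤ r x / ar := by rw [le_div_iff₀ har]; linarith only [h4]
          have g1 : q x ≤ b * (r x / ar) := h3.trans (mul_le_mul_of_nonneg_left gx hb.le)
          have g2 := mul_le_mul_of_nonneg_left g1 (le_of_lt (div_pos hbr ha))
          calc br / a * q x ≤ br / a * (b * (r x / ar)) := g2
          _ = b * br / (a * ar) * r x := by field_simp
        calc br / a * q x ≤ b * br / (a * ar) * r x := step
        _ ≤ max 1 (b * br / (a * ar)) * r x := mul_le_mul_of_nonneg_right hmax hrx
    have hbdd : BddBelow (distSet r q) := ⟨1, fun μ hμ => hμ.1⟩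
    obtain ⟨μ₁, hμ₁mem, hμ₁lt⟩ := (csInf_lt_iff hbdd hne).mp hrq
    obtain ⟨hμ₁1, l₀, hl₀, hrql⟩ := hμ₁mem
    -- final membership
    have h1mDδ : (0:ℝ) < 1 - D * δ := by linarith
    set μ := (1 + δ) * (1 + D * δ) / (1 - D * δ) with hμdef
    have hmemμ : μ ∈ distSet (fun x => r (S.mulVec x)) (fun x => q (T.mulVec x)) := by
      rw [distSet, Set.mem_setOf_eq]
      refine ⟨?_, l₀ * (1 + D * δ), mul_pos hl₀ (by linarith only [hDδ0]), fun x => ?_⟩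
      · rw [hμdef, le_div_iff₀ h1mDδ]
        nlinarith only [hδpos, hDδ0, mul_nonneg hDδ0 hδpos.le]
      constructor
      · have e1 : r (S.mulVec x) ≤ l₀ * q (S.mulVec x) := (hrql _).1
        have e2 := mul_le_mul_of_nonneg_left (hS_T x) hl₀.le
        nlinarith only [e1, e2]
      · have e1 : (1 - D * δ) * q (T.mulVec x) ≤ q (S.mulVec x) := hT_S x
        have e2 : l₀ * q (S.mulVec x) ≤ μ₁ * r (S.mulVec x) := (hrql _).2
        have e3 : μ₁ * r (S.mulVec x) ≤ (1 + δ) * r (S.mulVec x) :=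
          mul_le_mul_of_nonneg_right hμ₁lt.le (hr.1 _)
        rw [hμdef, div_mul_eq_mul_div, le_div_iff₀ h1mDδ]
        have e4 : l₀ * ((1 - D * δ) * q (T.mulVec x)) ≤ (1 + δ) * r (S.mulVec x) := by
          have f1 := mul_le_mul_of_nonneg_left e1 hl₀.le
          linarith only [f1, e2, e3]
        have e5 := mul_le_mul_of_nonneg_left e4 (by linarith : (0:ℝ) ≤ 1 + D * δ)
        nlinarith only [e5]
    have hμlt : μ < 1 + ε := by
      rw [hμdef, div_lt_iff₀ h1mDδ]
      have hδ3' : δ * (2 + 3 * D + ε * D) ≤ ε := by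
        rw [← le_div_iff₀ (by nlinarith [mul_pos hε hDpos] : (0:ℝ) < 2 + 3 * D + ε * D)]
        exact hδ3
      nlinarith only [hδ3', hδpos, hDδ0,
        mul_nonneg hDδ0 (by linarith only [hδ1] : (0:ℝ) ≤ 1 - δ)]
    have hle : multDist (fun x => r (S.mulVec x)) (fun x => q (T.mulVec x)) ≤ μ :=
      csInf_le ⟨1, fun ν hν => hν.1⟩ hmemμ
    linarith



noncomputable def Nrm (p : ℝ × ℝ) : ℝ := Real.sqrt (p.1 ^ 2 + p.2 ^ 2)

noncomputable def qex (p : ℝ × ℝ) : ℝ :=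
  if p.2 = 0 ∧ p.1 ≠ 0 then Real.sqrt (p.1 ^ 2 + p.2 ^ 2) / 2
  else Real.sqrt (p.1 ^ 2 + p.2 ^ 2)

lemma Nrm_nonneg (p : ℝ × ℝ) : 0 ≤ Nrm p := Real.sqrt_nonneg _

lemma Nrm_eq_abs (p : ℝ × ℝ) : Nrm p = ‖(⟨p.1, p.2⟩ : ℂ)‖ := by
  rw [Nrm, Complex.norm_def, Complex.normSq_mk]; ring_nf

lemma Nrm_eq_zero {p : ℝ × ℝ} : Nrm p = 0 ↔ p = 0 := by
  rw [Nrm_eq_abs, norm_eq_zero]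
  constructor
  · intro h
    have h1 := congrArg Complex.re h
    have h2 := congrArg Complex.im h
    simp at h1 h2
    exact Prod.ext h1 h2
  · intro h; subst h; simp; rfl

lemma Nrm_add_le (p q : ℝ × ℝ) : Nrm (p + q) ≤ Nrm p + Nrm q := by
  rw [Nrm_eq_abs, Nrm_eq_abs, Nrm_eq_abs]
  have : (⟨(p+q).1, (p+q).2⟩ : ℂ) = ⟨p.1, p.2⟩ + ⟨q.1, q.2⟩ := by
    apply Complex.ext <;> simp
  rw [this]
  exact norm_add_le _ _

lemma Nrm_smul (c : ℝ) (p : ℝ × ℝ) : Nrm (c • p) = |c| * Nrm p := by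
  rw [Nrm, Nrm]
  have h1 : (c • p).1 = c * p.1 := rfl
  have h2 : (c • p).2 = c * p.2 := rfl
  rw [h1, h2]
  have : (c * p.1) ^ 2 + (c * p.2) ^ 2 = c ^ 2 * (p.1 ^ 2 + p.2 ^ 2) := by ring
  rw [this, Real.sqrt_mul (sq_nonneg c), Real.sqrt_sq_eq_abs]

lemma Nrm_rot (a x y : ℝ) :
    Nrm (Real.cos a * x - Real.sin a * y, Real.sin a * x + Real.cos a * y) = Nrm (x, y) := by
  rw [Nrm, Nrm]
  congr 1
  simp only
  linear_combination (x ^ 2 + y ^ 2) * (Real.sin_sq_add_cos_sq a)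

lemma qex_bounds (p : ℝ × ℝ) : Nrm p / 2 ≤ qex p ∧ qex p ≤ Nrm p := by
  have h := Nrm_nonneg p
  rw [qex]
  split_ifs <;> constructor <;> simp [Nrm] <;> linarith

lemma qex_quasinorm : IsQuasinorm qex := by
  refine ⟨?_, ?_, ?_, 2, two_pos, ?_⟩
  · intro x; rw [qex]; split_ifs <;> positivity
  · intro x
    rw [qex]
    split_ifs with h
    · constructor
      · intro h0
        have : Nrm x = 0 := by rw [Nrm]; linarith
        exact Nrm_eq_zero.mp this
      · intro h0; subst h0; simp at h
    · constructor
      · intro h0; exact Nrm_eq_zero.mp h0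
      · intro h0; subst h0; simp [Nrm]
  · intro c x
    rcases eq_or_ne c 0 with hc | hc
    · subst hc
      simp only [zero_smul, abs_zero, zero_mul]
      have : qex 0 = Nrm 0 := by rw [qex, Nrm]; simp
      rw [this, Nrm_eq_zero.mpr rfl]
    · have h1 : (c • x).1 = c * x.1 := rfl
      have h2 : (c • x).2 = c * x.2 := rfl
      have hcond : ((c • x).2 = 0 ∧ (c • x).1 ≠ 0) ↔ (x.2 = 0 ∧ x.1 ≠ 0) := by
        rw [h1, h2, mul_eq_zero, mul_ne_zero_iff]
        simp [hc]
      have hN : Real.sqrt ((c • x).1 ^ 2 + (c • x).2 ^ 2) = |c| * Real.sqrt (x.1 ^ 2 + x.2 ^ 2) :=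
        Nrm_smul c x
      rw [qex, qex, hN]
      split_ifs with ha hb hb
      · ring
      · exact absurd (hcond.mp ha) hb
      · exact absurd (hcond.mpr hb) ha
      · rfl
  · intro x y
    have hxy := Nrm_add_le x y
    have hx := (qex_bounds x).1
    have hy := (qex_bounds y).1
    have h := (qex_bounds (x + y)).2
    linarith

example : IsQuasinorm qex := qex_quasinorm

noncomputable def qrot (a : ℝ) (p : ℝ × ℝ) : ℝ :=
  qex (Real.cos a * p.1 - Real.sin a * p.2, Real.sin a * p.1 + Real.cos a * p.2)

lemma qrot_bounds (a : ℝ) (p : ℝ × ℝ) : Nrm p / 2 ≤ qrot a p ∧ qrot a p ≤ Nrm p := by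
  have h := qex_bounds (Real.cos a * p.1 - Real.sin a * p.2,
    Real.sin a * p.1 + Real.cos a * p.2)
  have hr : Nrm (Real.cos a * p.1 - Real.sin a * p.2,
      Real.sin a * p.1 + Real.cos a * p.2) = Nrm p := Nrm_rot a p.1 p.2
  rw [qrot]
  rw [hr] at h
  exact h

lemma qrot_self (a : ℝ) : qrot a (Real.cos a, -Real.sin a) = 1 / 2 := by
  have key : (Real.cos a * (Real.cos a, -Real.sin a).1 - Real.sin a * (Real.cos a, -Real.sin a).2,
      Real.sin a * (Real.cos a, -Real.sin a).1 + Real.cos a * (Real.cos a, -Real.sin a).2)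
      = ((1:ℝ), (0:ℝ)) := by
    apply Prod.ext
    · show Real.cos a * Real.cos a - Real.sin a * (-Real.sin a) = 1
      linear_combination Real.sin_sq_add_cos_sq a
    · show Real.sin a * Real.cos a + Real.cos a * (-Real.sin a) = 0
      ring
  rw [qrot, key, qex]
  norm_num

lemma qrot_other {a b : ℝ} (h : Real.sin (b - a) ≠ 0) :
    qrot b (Real.cos a, -Real.sin a) = 1 := by
  have key : (Real.cos b * (Real.cos a, -Real.sin a).1 - Real.sin b * (Real.cos a, -Real.sin a).2,
      Real.sin b * (Real.cos a, -Real.sin a).1 + Real.cos b * (Real.cos a, -Real.sin a).2)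
      = (Real.cos (b - a), Real.sin (b - a)) := by
    apply Prod.ext
    · show Real.cos b * Real.cos a - Real.sin b * (-Real.sin a) = _
      rw [Real.cos_sub]; ring
    · show Real.sin b * Real.cos a + Real.cos b * (-Real.sin a) = _
      rw [Real.sin_sub]; ring
  rw [qrot, key, qex]
  split_ifs with hc
  · exact absurd hc.1 h
  · simp only
    rw [show Real.cos (b - a) ^ 2 + Real.sin (b - a) ^ 2 = 1 from Real.cos_sq_add_sin_sq _]
    exact Real.sqrt_one

lemma sin_ne_zero_of {θ : ℝ} (h0 : θ ≠ 0) (h1 : |θ| < π) : Real.sin θ ≠ 0 := by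
  intro h
  rw [Real.sin_eq_zero_iff] at h
  obtain ⟨m, hm⟩ := h
  have hπ := Real.pi_pos
  have hm0 : m ≠ 0 := by rintro rfl; simp at hm; exact h0 hm.symm
  have h1m : (1:ℤ) ≤ |m| := Int.one_le_abs hm0
  have h1m' : (1:ℝ) ≤ |(m:ℝ)| := by exact_mod_cast (by exact_mod_cast h1m : (1:ℝ) ≤ (|m| : ℤ))
  have : π ≤ |θ| := by
    rw [← hm, abs_mul, abs_of_pos hπ]
    nlinarith
  linarith

lemma multDist_rot {a b : ℝ} (hab : Real.sin (b - a) ≠ 0) (hba : Real.sin (a - b) ≠ 0) :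
    multDist (qrot a) (qrot b) = 4 := by
  have bdd : BddBelow (distSet (qrot a) (qrot b)) := ⟨1, fun μ hμ => hμ.1⟩
  have mem4 : (4:ℝ) ∈ distSet (qrot a) (qrot b) := by
    refine ⟨by norm_num, 2, two_pos, fun x => ?_⟩
    have h1 := qrot_bounds a x
    have h2 := qrot_bounds b x
    constructor <;> linarith [h1.1, h1.2, h2.1, h2.2]
  apply le_antisymm
  · exact csInf_le bdd mem4
  · apply le_csInf ⟨4, mem4⟩
    rintro μ ⟨hμ1, l, hl, h⟩
    have hA := h (Real.cos a, -Real.sin a)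
    have hB := h (Real.cos b, -Real.sin b)
    rw [qrot_self a, qrot_other hab] at hA
    rw [qrot_self b, qrot_other hba] at hB
    linarith [hA.1, hA.2, hB.1, hB.2]

lemma pidiv_bounds {k : ℕ} (hk : 1 ≤ k) : 0 < π / k ∧ π / k ≤ π := by
  have hk0 : (0:ℝ) < k := by exact_mod_cast Nat.pos_of_ne_zero (by omega)
  have hk1 : (1:ℝ) ≤ k := by exact_mod_cast hk
  exact ⟨div_pos Real.pi_pos hk0, div_le_self Real.pi_pos.le hk1⟩

lemma pidiv_ne {k l : ℕ} (hk : 1 ≤ k) (hl : 1 ≤ l) (hne : k ≠ l) : π / k ≠ π / l := by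
  have hk0 : (0:ℝ) < k := by exact_mod_cast Nat.pos_of_ne_zero (by omega)
  have hl0 : (0:ℝ) < l := by exact_mod_cast Nat.pos_of_ne_zero (by omega)
  intro h
  rw [div_eq_div_iff hk0.ne' hl0.ne'] at h
  have : (l:ℝ) = (k:ℝ) := mul_left_cancel₀ Real.pi_ne_zero h
  exact hne (by exact_mod_cast this.symm)

lemma part2 : (∃ q : ℝ × ℝ → ℝ, IsQuasinorm q ∧
      (∀ p : ℝ × ℝ, q p =
        if p.2 = 0 ∧ p.1 ≠ 0 then Real.sqrt (p.1 ^ 2 + p.2 ^ 2) / 2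
        else Real.sqrt (p.1 ^ 2 + p.2 ^ 2)) ∧
      ∀ k l : ℕ, 1 ≤ k → 1 ≤ l → k ≠ l →
        multDist
          (fun p : ℝ × ℝ => q (Real.cos (π / k) * p.1 - Real.sin (π / k) * p.2,
            Real.sin (π / k) * p.1 + Real.cos (π / k) * p.2))
          (fun p : ℝ × ℝ => q (Real.cos (π / l) * p.1 - Real.sin (π / l) * p.2,
            Real.sin (π / l) * p.1 + Real.cos (π / l) * p.2)) = 4) := by
  refine ⟨qex, qex_quasinorm, fun p => rfl, ?_⟩
  intro k l hk hl hne
  obtain ⟨hk1, hk2⟩ := pidiv_bounds hk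
  obtain ⟨hl1, hl2⟩ := pidiv_bounds hl
  have hne1 : π / (l:ℝ) - π / (k:ℝ) ≠ 0 := sub_ne_zero.mpr (pidiv_ne hl hk hne.symm)
  have hne2 : π / (k:ℝ) - π / (l:ℝ) ≠ 0 := sub_ne_zero.mpr (pidiv_ne hk hl hne)
  have habs1 : |π / (l:ℝ) - π / (k:ℝ)| < π := abs_lt.mpr ⟨by linarith, by linarith⟩
  have habs2 : |π / (k:ℝ) - π / (l:ℝ)| < π := abs_lt.mpr ⟨by linarith, by linarith⟩
  exact multDist_rot (sin_ne_zero_of hne1 habs1) (sin_ne_zero_of hne2 habs2)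

/-- (T, ‖·‖) ↦ T*‖·‖ is continuous on GL(n) × 𝒩, but not for quasinorms. -/
theorem stmt19 {n : ℕ} :
    (∀ q : (Fin n → ℝ) → ℝ, IsNormFn q → ∀ T : Matrix (Fin n) (Fin n) ℝ, IsUnit T →
      ∀ ε : ℝ, 0 < ε → ∃ δ : ℝ, 0 < δ ∧
        ∀ r : (Fin n → ℝ) → ℝ, IsNormFn r → ∀ S : Matrix (Fin n) (Fin n) ℝ, IsUnit S →
          (∀ i j, |S i j - T i j| < δ) → multDist r q < 1 + δ →
          multDist (fun x => r (S.mulVec x)) (fun x => q (T.mulVec x)) < 1 + ε) ∧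
    (∃ q : ℝ × ℝ → ℝ, IsQuasinorm q ∧
      (∀ p : ℝ × ℝ, q p =
        if p.2 = 0 ∧ p.1 ≠ 0 then Real.sqrt (p.1 ^ 2 + p.2 ^ 2) / 2
        else Real.sqrt (p.1 ^ 2 + p.2 ^ 2)) ∧
      ∀ k l : ℕ, 1 ≤ k → 1 ≤ l → k ≠ l →
        multDist
          (fun p : ℝ × ℝ => q (Real.cos (π / k) * p.1 - Real.sin (π / k) * p.2,
            Real.sin (π / k) * p.1 + Real.cos (π / k) * p.2))
          (fun p : ℝ × ℝ => q (Real.cos (π / l) * p.1 - Real.sin (π / l) * p.2,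
            Real.sin (π / l) * p.1 + Real.cos (π / l) * p.2)) = 4) :=
  ⟨part1, part2⟩
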